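/- Let N_tx, N_rx be natural numbers with N_rx ≥ 1, N_tx ≥ 2, and N_tx ≤ N_rx + 1, and let S be a nonempty subset of the ULA U_{N_tx} = {0, 1, ..., N_tx − 1}. Then S + U_{N_rx} = U_{N_tx + N_rx − 1} if and only if both 0 ∈ S and N_tx − 1 ∈ S. -/
import Mathlib


open Finset Pointwise

theorem stmt_3 (Ntx Nrx : ℕ) (hrx : 1 ≤ Nrx) (htx : 2 ≤ Ntx) (hle : Ntx ≤ Nrx + 1)
    (S : Finset ℕ) (hSne : S.Nonempty) (hS : S ⊆ Finset.range Ntx) :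
    S + Finset.range Nrx = Finset.range (Ntx + Nrx - 1) ↔ 0 ∈ S ∧ Ntx - 1 ∈ S := by
  constructor
  · intro h
    constructor
    · have h0 : (0 : ℕ) ∈ Finset.range (Ntx + Nrx - 1) := by
        simp; omega
      rw [← h, Finset.mem_add] at h0
      obtain ⟨y, hy, z, hz, hyz⟩ := h0
      have : y = 0 := by omega
      rwa [this] at hy
    · have h0 : (Ntx + Nrx - 2) ∈ Finset.range (Ntx + Nrx - 1) := by
        simp; omega
      rw [← h, Finset.mem_add] at h0
      obtain ⟨y, hy, z, hz, hyz⟩ := h0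
      have hy' := hS hy
      simp only [Finset.mem_range] at hy' hz
      have : y = Ntx - 1 := by omega
      rwa [this] at hy
  · rintro ⟨h0, h1⟩
    apply Finset.Subset.antisymm
    · intro x hx
      rw [Finset.mem_add] at hx
      obtain ⟨y, hy, z, hz, hyz⟩ := hx
      have hy' := hS hy
      simp only [Finset.mem_range] at hy' hz ⊢
      omega
    · intro x hx
      simp only [Finset.mem_range] at hx
      rw [Finset.mem_add]
      by_cases hc : x < Nrx
      · exact ⟨0, h0, x, by simpa using hc, by omega⟩
      · exact ⟨Ntx - 1, h1, x - (Ntx - 1), by simp; omega, by omega⟩
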